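/- For real numbers ê ≥ 0 and c ≥ 0, the integral ∫_{ê}^{∞} 2·exp(-x²/2) dx is at most ∫_{ê}^{∞} (exp(-(x-c)²/2) + exp(-(x+c)²/2)) dx, with equality when ê = 0. -/
import Mathlib

open MeasureTheory Real

private noncomputable def gfun : ℝ → ℝ := fun x => Real.exp (-x ^ 2 / 2)

private lemma gfun_int : Integrable gfun := by
  have h := integrable_exp_neg_mul_sq (by norm_num : (0:ℝ) < 1/2)
  refine h.congr ?_
  filter_upwards with x
  show Real.exp (-(1/2) * x ^ 2) = gfun x
  simp only [gfun]
  ring_nf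

private lemma shift_eq (e d : ℝ) :
    (∫ x in Set.Ici e, gfun (x - d)) = ∫ x in Set.Ici (e - d), gfun x := by
  have h1 : (∫ x in Set.Ici e, gfun (x - d)) =
      ∫ x, (Set.Ici (e - d)).indicator gfun (x - d) := by
    rw [← integral_indicator measurableSet_Ici]
    congr 1; ext x
    by_cases hx : e ≤ x <;>
      simp [Set.indicator_apply, Set.mem_Ici, hx, sub_le_sub_iff_right]
  rw [h1, integral_sub_right_eq_self ((Set.Ici (e - d)).indicator gfun) d,
    integral_indicator measurableSet_Ici]

private lemma split_eq (a b : ℝ) (hab : a ≤ b) :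
    (∫ x in Set.Ici a, gfun x) = (∫ x in a..b, gfun x) + ∫ x in Set.Ici b, gfun x := by
  rw [integral_Ici_eq_integral_Ioi, integral_Ici_eq_integral_Ioi,
    intervalIntegral.integral_of_le hab]
  rw [← setIntegral_union (Set.Ioc_disjoint_Ioi le_rfl) measurableSet_Ioi
    (gfun_int.integrableOn) (gfun_int.integrableOn), Set.Ioc_union_Ioi_eq_Ioi hab]

theorem stmt_1 (ehat c : ℝ) (hehat : 0 ≤ ehat) (hc : 0 ≤ c) :
    ((∫ x in Set.Ici ehat, 2 * Real.exp (-x ^ 2 / 2)) ≤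
      ∫ x in Set.Ici ehat,
        (Real.exp (-(x - c) ^ 2 / 2) + Real.exp (-(x + c) ^ 2 / 2))) ∧
    (ehat = 0 →
      (∫ x in Set.Ici ehat, 2 * Real.exp (-x ^ 2 / 2)) =
        ∫ x in Set.Ici ehat,
          (Real.exp (-(x - c) ^ 2 / 2) + Real.exp (-(x + c) ^ 2 / 2))) := by
  have hL : (∫ x in Set.Ici ehat, 2 * Real.exp (-x ^ 2 / 2)) =
      2 * ∫ x in Set.Ici ehat, gfun x := by
    rw [← integral_const_mul]; rfl
  have hR : (∫ x in Set.Ici ehat,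
        (Real.exp (-(x - c) ^ 2 / 2) + Real.exp (-(x + c) ^ 2 / 2))) =
      (∫ x in Set.Ici (ehat - c), gfun x) + ∫ x in Set.Ici (ehat + c), gfun x := by
    have h1 : IntegrableOn (fun x => gfun (x - c)) (Set.Ici ehat) :=
      ((gfun_int.comp_sub_right c).integrableOn)
    have h2 : IntegrableOn (fun x => gfun (x + c)) (Set.Ici ehat) :=
      ((gfun_int.comp_add_right c).integrableOn)
    rw [show (∫ x in Set.Ici ehat,
        (Real.exp (-(x - c) ^ 2 / 2) + Real.exp (-(x + c) ^ 2 / 2))) =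
        ∫ x in Set.Ici ehat, (gfun (x - c) + gfun (x + c)) from rfl,
      integral_add h1 h2]
    congr 1
    · exact shift_eq ehat c
    · have := shift_eq ehat (-c)
      simpa [sub_neg_eq_add] using this
  -- key identity
  have key : (∫ x in Set.Ici (ehat - c), gfun x) + (∫ x in Set.Ici (ehat + c), gfun x) =
      2 * (∫ x in Set.Ici ehat, gfun x)
      + ((∫ x in ehat..ehat + c, gfun (2 * ehat - x)) - ∫ x in ehat..ehat + c, gfun x) := by
    have hA := split_eq (ehat - c) ehat (by linarith)
    have hB := split_eq ehat (ehat + c) (by linarith)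
    have hrefl : (∫ x in ehat..ehat + c, gfun (2 * ehat - x)) =
        ∫ x in (ehat - c)..ehat, gfun x := by
      rw [intervalIntegral.integral_comp_sub_left gfun (2 * ehat)]
      ring_nf
    rw [hrefl]
    linarith
  have hmono : (∫ x in ehat..ehat + c, gfun x) ≤
      ∫ x in ehat..ehat + c, gfun (2 * ehat - x) := by
    apply intervalIntegral.integral_mono_on (by linarith)
    · exact gfun_int.intervalIntegrable
    · exact (gfun_int.comp_sub_left (2 * ehat)).intervalIntegrable
    · intro x hx
      simp only [Set.mem_Icc] at hx
      simp only [gfun]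
      apply Real.exp_le_exp.mpr
      have h2 : (2 * ehat - x) ^ 2 ≤ x ^ 2 := by nlinarith [hx.1, hx.2]
      linarith
  constructor
  · rw [hL, hR, key]
    linarith
  · intro h0
    subst h0
    rw [hL, hR, key]
    have : (∫ x in (0:ℝ)..0 + c, gfun (2 * 0 - x)) = ∫ x in (0:ℝ)..0 + c, gfun x := by
      apply intervalIntegral.integral_congr
      intro x hx
      simp [gfun]
    rw [this]
    ring
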